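/- Let R be a commutative integral domain, let I and J be linearly ordered cancellative additive commutative monoids, and let A and B be associative unital R-algebras equipped with compatibly ordered bases indexed by I and J respectively. Then the R-algebra A ⊗_R B (tensor product over R, with its natural algebra structure) has no zero divisors: if z · w = 0 in A ⊗_R B then z = 0 or w = 0. -/

import Mathlib

open scoped TensorProduct

/-- An algebra over a domain with a compatibly ordered basis has no zero divisors. -/
theorem compat_basis_no_zero_div
    {R : Type*} [CommRing R] [IsDomain R]
    {I : Type*} [AddCommMonoid I] [LinearOrder I] [IsOrderedCancelAddMonoid I]
    {A : Type*} [Ring A] [Algebra R A]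
    (b : Module.Basis I R A)
    (hb : ∀ i j : I, ∃ u : Rˣ, b i * b j = u • b (i + j)) :
    ∀ z w : A, z * w = 0 → z = 0 ∨ w = 0 := by
  classical
  intro z w hzw
  by_contra hc
  push_neg at hc
  obtain ⟨hz, hw⟩ := hc
  set f := b.repr z with hf
  set g := b.repr w with hg
  have hf0 : f ≠ 0 := fun h => hz (b.repr.map_eq_zero_iff.mp h)
  have hg0 : g ≠ 0 := fun h => hw (b.repr.map_eq_zero_iff.mp h)
  have hfs : f.support.Nonempty := Finsupp.support_nonempty_iff.mpr hf0
  have hgs : g.support.Nonempty := Finsupp.support_nonempty_iff.mpr hg0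
  set i₀ := f.support.max' hfs with hi₀
  set j₀ := g.support.max' hgs with hj₀
  -- expand the product
  have expand : z * w =
      f.sum fun i r => g.sum fun j s => (r * s * ((hb i j).choose : R)) • b (i + j) := by
    conv_lhs => rw [← b.linearCombination_repr z, ← b.linearCombination_repr w]
    rw [Finsupp.linearCombination_apply, Finsupp.linearCombination_apply, ← hf, ← hg, Finsupp.sum_mul]
    refine Finsupp.sum_congr fun i _ => ?_
    rw [Finsupp.mul_sum]
    refine Finsupp.sum_congr fun j _ => ?_
    conv_lhs => rw [smul_mul_smul_comm, (hb i j).choose_spec]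
    rw [Units.smul_def, smul_smul]
  have hcoeff : b.repr (z * w) (i₀ + j₀) = f i₀ * g j₀ * ((hb i₀ j₀).choose : R) := by
    rw [expand, Finsupp.sum, map_sum, Finset.sum_apply']
    rw [Finset.sum_eq_single i₀]
    · rw [Finsupp.sum, map_sum, Finset.sum_apply']
      rw [Finset.sum_eq_single j₀]
      · rw [map_smul, b.repr_self, Finsupp.smul_apply, Finsupp.single_eq_same, smul_eq_mul,
          mul_one]
      · intro j hj hjne
        have hjlt : j < j₀ := lt_of_le_of_ne (g.support.le_max' j hj) hjne
        rw [map_smul, b.repr_self, Finsupp.smul_apply, Finsupp.single_apply,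
          if_neg (by exact fun h => absurd (add_left_cancel h) (ne_of_lt hjlt)), smul_zero]
      · intro hj
        simp [Finsupp.notMem_support_iff.mp hj]
    · intro i hi hine
      have hilt : i < i₀ := lt_of_le_of_ne (f.support.le_max' i hi) hine
      rw [Finsupp.sum, map_sum, Finset.sum_apply']
      refine Finset.sum_eq_zero fun j hj => ?_
      have hjle : j ≤ j₀ := g.support.le_max' j hj
      have : i + j < i₀ + j₀ := add_lt_add_of_lt_of_le hilt hjle
      rw [map_smul, b.repr_self, Finsupp.smul_apply, Finsupp.single_apply,
        if_neg (ne_of_lt this), smul_zero]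
    · intro hi
      simp [Finsupp.notMem_support_iff.mp hi]
  rw [hzw] at hcoeff
  simp only [map_zero, Finsupp.coe_zero, Pi.zero_apply] at hcoeff
  have h1 : f i₀ ≠ 0 := Finsupp.mem_support_iff.mp (f.support.max'_mem hfs)
  have h2 : g j₀ ≠ 0 := Finsupp.mem_support_iff.mp (g.support.max'_mem hgs)
  have h3 : ((hb i₀ j₀).choose : R) ≠ 0 := Units.ne_zero _
  exact (mul_ne_zero (mul_ne_zero h1 h2) h3) hcoeff.symm

/-- If `R` is a commutative domain and `A`, `B` are associative unital `R`-algebras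
with compatibly ordered bases indexed by linearly ordered cancellative additive
commutative monoids `I` and `J` respectively, then the tensor product algebra
`A ⊗[R] B` has no zero divisors. -/
theorem stated_skein_tensor_product_domain
    {R : Type*} [CommRing R] [IsDomain R]
    {I J : Type*} [AddCommMonoid I] [LinearOrder I] [IsOrderedCancelAddMonoid I]
    [AddCommMonoid J] [LinearOrder J] [IsOrderedCancelAddMonoid J]
    {A B : Type*} [Ring A] [Algebra R A] [Ring B] [Algebra R B]
    (bA : Module.Basis I R A) (bB : Module.Basis J R B)
    (hbA : ∀ i j : I, ∃ u : Rˣ, bA i * bA j = u • bA (i + j))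
    (hbB : ∀ i j : J, ∃ u : Rˣ, bB i * bB j = u • bB (i + j)) :
    ∀ z w : A ⊗[R] B, z * w = 0 → z = 0 ∨ w = 0 := by
  classical
  let b : Module.Basis (I ×ₗ J) R (A ⊗[R] B) :=
    (Module.Basis.tensorProduct bA bB).reindex (toLex : I × J ≃ I ×ₗ J)
  refine compat_basis_no_zero_div b ?_
  intro k l
  obtain ⟨u, hu⟩ := hbA (ofLex k).1 (ofLex l).1
  obtain ⟨v, hv⟩ := hbB (ofLex k).2 (ofLex l).2
  refine ⟨u * v, ?_⟩
  have hbk : ∀ m : I ×ₗ J, b m = bA (ofLex m).1 ⊗ₜ[R] bB (ofLex m).2 := by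
    intro m
    simp [b, Module.Basis.tensorProduct_apply']
  rw [hbk, hbk, hbk, Algebra.TensorProduct.tmul_mul_tmul, hu, hv]
  have : (ofLex (k + l)).1 = (ofLex k).1 + (ofLex l).1 ∧
      (ofLex (k + l)).2 = (ofLex k).2 + (ofLex l).2 := ⟨rfl, rfl⟩
  rw [this.1, this.2]
  simp [TensorProduct.smul_tmul', smul_smul, mul_comm]
  rw [Units.smul_def, Units.smul_def, TensorProduct.smul_tmul']
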